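/- arXiv:1611.01288 — 3 statements merged into one kernel-verified Lean document; each statement's English description precedes it below -/
import Mathlib

section
/- Let f : ℕ → ℝ be 2-additive, i.e. f(k) = Σ_{j : k_j = 1} f(2^j) for every k ∈ ℕ with binary digits k = Σ_{j≥0} k_j 2^j (in particular f(0) = 0). Then for every V ∈ ℕ, V ≥ 1: |Σ_{v=0}^{V−1} e(f(v))| ≤ Σ_{r=0}^{⌊log₂V⌋} ∏_{j=0}^{r−1} |1 + e(f(2^j))| = Σ_{r=0}^{⌊log₂V⌋} 2^r ∏_{j=0}^{r−1} |cos(π f(2^j))|, where e(t) = exp(2πit). -/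
open Real

noncomputable section

/-- `e(t) = exp(2πit)`. -/
def eFun (t : ℝ) : ℂ := Complex.exp (2 * π * Complex.I * t)

lemma eFun_add (a b : ℝ) : eFun (a + b) = eFun a * eFun b := by
  unfold eFun
  rw [← Complex.exp_add]
  push_cast
  ring_nf

lemma abs_eFun (t : ℝ) : ‖eFun t‖ = 1 := by
  unfold eFun
  rw [Complex.norm_exp]
  simp [Complex.mul_re]

lemma abs_one_add_eFun (t : ℝ) :
    ‖1 + eFun t‖ = 2 * |Real.cos (π * t)| := by
  have h2 : (2:ℂ) * Complex.cos (π * t)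
      = Complex.exp ((π:ℂ) * t * Complex.I) + Complex.exp (-((π:ℂ) * t) * Complex.I) := by
    rw [Complex.cos]; ring
  have h : (1 : ℂ) + eFun t
      = Complex.exp (π * Complex.I * t) * (2 * Complex.cos (π * t)) := by
    rw [eFun, h2, mul_add, ← Complex.exp_add, ← Complex.exp_add,
      show (π:ℂ) * Complex.I * t + (π:ℂ) * t * Complex.I = 2 * π * Complex.I * t by ring,
      show (π:ℂ) * Complex.I * t + -((π:ℂ) * t) * Complex.I = 0 by ring,
      Complex.exp_zero]
    ring
  rw [h, norm_mul, Complex.norm_exp]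
  have hre : (↑π * Complex.I * ↑t).re = 0 := by
    simp [Complex.mul_re, Complex.mul_im]
  rw [hre, Real.exp_zero, one_mul]
  have : (2 : ℂ) * Complex.cos (π * t) = ((2 * Real.cos (π * t) : ℝ) : ℂ) := by
    push_cast [Complex.ofReal_cos]
    ring
  rw [this, Complex.norm_real, Real.norm_eq_abs, abs_mul]
  norm_num

section main

variable (f : ℕ → ℝ)
    (hf : ∀ k : ℕ, f k = ∑ j ∈ Finset.range (k + 1),
      if k.testBit j then f (2 ^ j) else 0)

include hf

lemma f_eq_sum (k M : ℕ) (hM : k + 1 ≤ M) :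
    f k = ∑ j ∈ Finset.range M, if k.testBit j then f (2 ^ j) else 0 := by
  rw [hf k]
  apply Finset.sum_subset (Finset.range_subset_range.2 hM)
  intro j _ hj
  simp only [Finset.mem_range, not_lt] at hj
  have : k.testBit j = false := by
    apply Nat.testBit_lt_two_pow
    calc k < k + 1 := Nat.lt_succ_self k
    _ ≤ j := hj
    _ < 2 ^ j := Nat.lt_two_pow_self
  simp [this]

lemma f_zero : f 0 = 0 := by
  rw [hf 0]; simp

lemma f_two_pow_add (L b : ℕ) (hb : b < 2 ^ L) :
    f (2 ^ L + b) = f (2 ^ L) + f b := by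
  set M := 2 ^ L + b + 1 with hM
  rw [f_eq_sum f hf (2 ^ L + b) M le_rfl,
      f_eq_sum f hf (2 ^ L) M (by omega),
      f_eq_sum f hf b M (by omega), ← Finset.sum_add_distrib]
  apply Finset.sum_congr rfl
  intro j _
  have hbit : (2 ^ L + b).testBit j = if j < L then b.testBit j else decide (j = L) := by
    have := Nat.testBit_two_pow_mul_add 1 hb j
    rw [mul_one] at this
    rw [this]
    rcases lt_or_ge j L with h | h
    · rw [if_pos h, if_pos h]
    · rw [if_neg (not_lt.2 h), if_neg (not_lt.2 h)]
      rcases eq_or_lt_of_le h with h' | h'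
      · subst h'; simp
      · have hone : Nat.testBit 1 (j - L) = false := by
          rw [show (1:ℕ) = 2 ^ 0 by rfl]
          exact Nat.testBit_two_pow_of_ne (by omega)
        simp [hone]; omega
  have hpow : (2 ^ L).testBit j = decide (j = L) := by
    rw [Nat.testBit_two_pow]
    simp [eq_comm]
  have hbj : j = L → b.testBit j = false := by
    intro h; subst h; exact Nat.testBit_lt_two_pow hb
  have hj2 : L < j → b.testBit j = false := by
    intro h
    exact Nat.testBit_lt_two_pow (lt_of_lt_of_le hb (Nat.pow_le_pow_right (by norm_num) h.le))
  rw [hbit, hpow]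
  rcases lt_trichotomy j L with h | h | h
  · simp [h, Nat.ne_of_lt h]
  · subst h
    simp [hbj rfl]
  · simp [not_lt.2 h.le, (by omega : ¬ j = L), hj2 h]

lemma sum_two_pow (L : ℕ) :
    ∑ v ∈ Finset.range (2 ^ L), eFun (f v)
      = ∏ j ∈ Finset.range L, (1 + eFun (f (2 ^ j))) := by
  induction L with
  | zero => simp [f_zero f hf, eFun]
  | succ L ih =>
    rw [pow_succ, mul_two, Finset.sum_range_add, Finset.prod_range_succ, ← ih]
    have : ∀ w ∈ Finset.range (2 ^ L), eFun (f (2 ^ L + w))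
        = eFun (f (2 ^ L)) * eFun (f w) := by
      intro w hw
      rw [f_two_pow_add f hf L w (Finset.mem_range.1 hw), eFun_add]
    rw [Finset.sum_congr rfl this, ← Finset.mul_sum]
    ring

lemma main_ineq : ∀ V : ℕ, 1 ≤ V →
    ‖∑ v ∈ Finset.range V, eFun (f v)‖ ≤
      ∑ r ∈ Finset.range (Nat.log 2 V + 1),
        ∏ j ∈ Finset.range r, ‖1 + eFun (f (2 ^ j))‖ := by
  intro V
  induction V using Nat.strong_induction_on with
  | _ V ih =>
    intro hV
    set L := Nat.log 2 V with hL
    have hV0 : V ≠ 0 := by omega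
    have h1 : 2 ^ L ≤ V := Nat.pow_log_le_self 2 hV0
    have h2 : V < 2 ^ (L + 1) := Nat.lt_pow_succ_log_self (by norm_num) V
    set W := V - 2 ^ L with hW
    have hVW : V = 2 ^ L + W := by omega
    have hWlt : W < 2 ^ L := by
      have : 2 ^ (L + 1) = 2 ^ L + 2 ^ L := by rw [pow_succ]; ring
      omega
    have hsplit : ∑ v ∈ Finset.range V, eFun (f v)
        = (∏ j ∈ Finset.range L, (1 + eFun (f (2 ^ j))))
          + eFun (f (2 ^ L)) * ∑ w ∈ Finset.range W, eFun (f w) := by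
      rw [hVW, Finset.sum_range_add, sum_two_pow f hf]
      congr 1
      rw [Finset.mul_sum]
      apply Finset.sum_congr rfl
      intro w hw
      rw [f_two_pow_add f hf L w (lt_trans (Finset.mem_range.1 hw) hWlt), eFun_add]
    have key : ‖∑ v ∈ Finset.range V, eFun (f v)‖
        ≤ (∏ j ∈ Finset.range L, ‖1 + eFun (f (2 ^ j))‖)
          + ‖∑ w ∈ Finset.range W, eFun (f w)‖ := by
      rw [hsplit]
      refine le_trans (norm_add_le _ _) ?_
      rw [norm_prod, norm_mul, abs_eFun, one_mul]
    rw [Finset.sum_range_succ]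
    rcases Nat.eq_zero_or_pos W with hW0 | hW0
    · rw [hW0] at key
      simp only [Finset.range_zero, Finset.sum_empty, norm_zero, add_zero] at key
      refine le_trans key ?_
      have : (0:ℝ) ≤ ∑ r ∈ Finset.range L,
          ∏ j ∈ Finset.range r, ‖1 + eFun (f (2 ^ j))‖ := by
        apply Finset.sum_nonneg
        intro r _
        exact Finset.prod_nonneg fun j _ => norm_nonneg _
      linarith
    · have hWV : W < V := by omega
      have hIH := ih W hWV hW0
      have hlog : Nat.log 2 W + 1 ≤ L := by
        have := Nat.log_lt_of_lt_pow (by omega : W ≠ 0) hWlt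
        omega
      have hmono : ∑ r ∈ Finset.range (Nat.log 2 W + 1),
            ∏ j ∈ Finset.range r, ‖1 + eFun (f (2 ^ j))‖
          ≤ ∑ r ∈ Finset.range L,
            ∏ j ∈ Finset.range r, ‖1 + eFun (f (2 ^ j))‖ := by
        apply Finset.sum_le_sum_of_subset_of_nonneg (Finset.range_subset_range.2 hlog)
        intro r _ _
        exact Finset.prod_nonneg fun j _ => norm_nonneg _
      linarith

end main

/-- Lemma 2.3 (key estimate): if `f : ℕ → ℝ` is `2`-additive, i.e. `f(k)` equals the
sum of `f(2^j)` over the binary digits `k_j = 1` of `k`, then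
`|Σ_{v<V} e(f(v))| ≤ Σ_{r=0}^{⌊log₂ V⌋} ∏_{j<r} |1 + e(f(2^j))|
  = Σ_{r=0}^{⌊log₂ V⌋} 2^r ∏_{j<r} |cos(π f(2^j))|`. -/
theorem abs_expSum_le_of_twoAdditive (f : ℕ → ℝ)
    (hf : ∀ k : ℕ, f k = ∑ j ∈ Finset.range (k + 1),
      if k.testBit j then f (2 ^ j) else 0)
    (V : ℕ) (hV : 1 ≤ V) :
    ‖∑ v ∈ Finset.range V, eFun (f v)‖ ≤
      (∑ r ∈ Finset.range (Nat.log 2 V + 1),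
        ∏ j ∈ Finset.range r, ‖1 + eFun (f (2 ^ j))‖) ∧
    (∑ r ∈ Finset.range (Nat.log 2 V + 1),
        ∏ j ∈ Finset.range r, ‖1 + eFun (f (2 ^ j))‖) =
      ∑ r ∈ Finset.range (Nat.log 2 V + 1),
        2 ^ r * ∏ j ∈ Finset.range r, |Real.cos (π * f (2 ^ j))| := by
  constructor
  · exact main_ineq f hf V hV
  · apply Finset.sum_congr rfl
    intro r _
    rw [Finset.prod_congr rfl (fun j _ => abs_one_add_eFun (f (2 ^ j))),
        Finset.prod_mul_distrib, Finset.prod_const, Finset.card_range]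

end
end

section
/- Let α ∈ ℝ be irrational with bounded continued fraction coefficients. Then there exists a constant C = C(α) > 0 such that for all positive integers K, H, N with K ≤ N and H ≤ N: Σ_{ℓ=1}^{⌊log₂K⌋} Σ_{h=1}^{⌊H/2^ℓ⌋} 1/(h·‖2^ℓ α h‖) ≤ C·H·log K. -/
set_option maxHeartbeats 1000000
open Real
noncomputable section

/-- `‖t‖`: the distance from `t` to the nearest integer. -/
def distNearestInt (t : ℝ) : ℝ := |t - (round t : ℝ)|

/-- `α` has bounded continued fraction coefficients: the partial quotients of its
continued fraction expansion are bounded. -/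
def BoundedCF (α : ℝ) : Prop :=
  ∃ B : ℝ, ∀ i : ℕ, ∀ b ∈ ((GenContFract.of α).partDens.get? i), b ≤ B

/-- The Gauss map composed with inversion: `x ↦ fract x⁻¹`. -/
def gaussInv (x : ℝ) : ℝ := Int.fract x⁻¹

/-- All Gauss iterates are irrational, in (0,1), with partial quotient ≤ B. -/
def GoodCF (B : ℝ) (γ : ℝ) : Prop :=
  ∀ n : ℕ, Irrational (gaussInv^[n] γ) ∧ 0 < gaussInv^[n] γ ∧ gaussInv^[n] γ < 1 ∧
    ((⌊(gaussInv^[n] γ)⁻¹⌋ : ℝ) ≤ B)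

lemma GoodCF.gauss {B γ : ℝ} (h : GoodCF B γ) : GoodCF B (gaussInv γ) := by
  intro n
  rw [← Function.iterate_succ_apply]
  exact h (n + 1)

lemma GoodCF.self {B γ : ℝ} (h : GoodCF B γ) :
    Irrational γ ∧ 0 < γ ∧ γ < 1 ∧ ((⌊γ⁻¹⌋ : ℝ) ≤ B) := by
  simpa using h 0

lemma GoodCF.floor_pos {B γ : ℝ} (h : GoodCF B γ) : 1 ≤ ⌊γ⁻¹⌋ := by
  obtain ⟨_, h0, h1, _⟩ := h.self
  have : (1:ℝ) < γ⁻¹ := (one_lt_inv₀ h0).2 h1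
  exact Int.le_floor.2 (by exact_mod_cast this.le)

lemma GoodCF.eq_gauss {B γ : ℝ} (h : GoodCF B γ) :
    γ⁻¹ = (⌊γ⁻¹⌋ : ℝ) + gaussInv γ := by
  simp only [gaussInv, Int.fract]; ring

lemma GoodCF.lb {B γ : ℝ} (h : GoodCF B γ) : 1 / (B + 1) < γ := by
  obtain ⟨_, h0, h1, hB⟩ := h.self
  have hg1 : gaussInv γ < 1 := by simpa using (h.gauss.self).2.2.1
  have : γ⁻¹ < B + 1 := by
    rw [h.eq_gauss]; linarith
  have hB0 : (0:ℝ) < B + 1 := lt_trans (inv_pos.2 h0) this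
  rw [div_lt_iff₀ hB0] at *
  nlinarith [inv_mul_cancel₀ (ne_of_gt h0)]

lemma GoodCF.ub {B γ : ℝ} (h : GoodCF B γ) : γ < (B + 1) / (B + 2) := by
  obtain ⟨_, h0, h1, hB⟩ := h.self
  have hBpos : (0:ℝ) < B + 1 := by
    have := h.floor_pos
    have : (1:ℝ) ≤ (⌊γ⁻¹⌋:ℝ) := by exact_mod_cast this
    linarith
  have hg : 1 / (B + 1) < gaussInv γ := h.gauss.lb
  have hfl : (1:ℝ) ≤ (⌊γ⁻¹⌋:ℝ) := by exact_mod_cast h.floor_pos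
  have : (B + 2) / (B + 1) < γ⁻¹ := by
    rw [h.eq_gauss]
    rw [div_lt_iff₀ hBpos] at *
    nlinarith
  have h2 : (0:ℝ) < B + 2 := by linarith
  rw [lt_div_iff₀ h2]
  rw [div_lt_iff₀ hBpos] at this
  nlinarith [inv_mul_cancel₀ (ne_of_gt h0)]


/-- The correction product. -/
def cfProd (q : ℕ) : ℝ := ∏ j ∈ Finset.Icc 2 q, (1 + 1 / (j:ℝ)^2)

lemma cfProd_factor_nonneg {j : ℕ} : (0:ℝ) ≤ 1 + 1 / (j:ℝ)^2 := by positivity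

lemma cfProd_one_le (q : ℕ) : 1 ≤ cfProd q := by
  unfold cfProd
  calc (1:ℝ) = ∏ j ∈ Finset.Icc 2 q, 1 := by simp
    _ ≤ _ := Finset.prod_le_prod (by intro j _; norm_num)
      (by intro j _; nlinarith [cfProd_factor_nonneg (j := j), (by positivity : (0:ℝ) ≤ 1/(j:ℝ)^2)])

lemma cfProd_pos (q : ℕ) : 0 < cfProd q := lt_of_lt_of_le one_pos (cfProd_one_le q)

lemma cfProd_succ (q : ℕ) (hq : 1 ≤ q) :
    cfProd (q+1) = cfProd q * (1 + 1 / ((q:ℝ)+1)^2) := by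
  unfold cfProd
  rw [Finset.prod_Icc_succ_top (by omega : 2 ≤ q + 1)]
  push_cast
  ring

lemma cfProd_mono : Monotone cfProd := by
  apply monotone_nat_of_le_succ
  intro q
  rcases Nat.lt_or_ge q 1 with h | h
  · have : q = 0 := by omega
    subst this
    simp [cfProd]
  · rw [cfProd_succ q h]
    nlinarith [cfProd_pos q, (by positivity : (0:ℝ) < 1/((q:ℝ)+1)^2)]

lemma sum_inv_sq_le : ∀ q : ℕ, 1 ≤ q → ∑ j ∈ Finset.Icc 2 q, 1/(j:ℝ)^2 ≤ 1 - 1/(q:ℝ) := by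
  intro q
  induction q with
  | zero => omega
  | succ n ih =>
    intro _
    rcases Nat.lt_or_ge n 1 with h | h
    · interval_cases n
      simp
    · rw [Finset.sum_Icc_succ_top (by omega : 2 ≤ n + 1)]
      have hn : (1:ℝ) ≤ (n:ℝ) := by exact_mod_cast h
      have h1 : ∑ j ∈ Finset.Icc 2 n, 1/(j:ℝ)^2 ≤ 1 - 1/(n:ℝ) := ih h
      have hkey : 1/((n:ℝ)+1)^2 ≤ 1/(n:ℝ) - 1/((n:ℝ)+1) := by
        rw [div_sub_div _ _ (by linarith) (by linarith)]
        rw [div_le_div_iff₀ (by nlinarith) (by nlinarith)]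
        ring_nf
        nlinarith
      push_cast
      linarith

lemma cfProd_le_three (q : ℕ) : cfProd q ≤ 3 := by
  rcases Nat.lt_or_ge q 1 with h | h
  · interval_cases q
    simp [cfProd]
  have h1 : cfProd q ≤ Real.exp (∑ j ∈ Finset.Icc 2 q, 1/(j:ℝ)^2) := by
    rw [Real.exp_sum]
    apply Finset.prod_le_prod
    · intro j hj
      positivity
    · intro j hj
      have := Real.add_one_le_exp (1/(j:ℝ)^2)
      linarith
  have h2 : ∑ j ∈ Finset.Icc 2 q, 1/(j:ℝ)^2 ≤ 1 := by
    have := sum_inv_sq_le q h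
    have : (0:ℝ) < 1/(q:ℝ) := by positivity
    linarith [sum_inv_sq_le q h]
  calc cfProd q ≤ Real.exp (∑ j ∈ Finset.Icc 2 q, 1/(j:ℝ)^2) := h1
    _ ≤ Real.exp 1 := Real.exp_le_exp.2 h2
    _ ≤ 3 := by linarith [Real.exp_one_lt_d9]


lemma keyLemma (B : ℝ) : ∀ q : ℕ, 1 ≤ q → ∀ γ : ℝ, GoodCF B γ → ∀ p : ℤ,
    1 / ((B + 2) * cfProd q) ≤ (q:ℝ) * |(q:ℝ) * γ - (p:ℝ)| := by
  intro q
  induction q using Nat.strong_induction_on with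
  | _ q ih =>
  intro hq γ h p
  obtain ⟨hirr, h0, h1, hB⟩ := h.self
  have hfl : 1 ≤ ⌊γ⁻¹⌋ := h.floor_pos
  have hB1 : (1:ℝ) ≤ B := le_trans (by exact_mod_cast hfl) hB
  have hB2 : (0:ℝ) < B + 2 := by linarith
  have hlb : 1/(B+1) < γ := h.lb
  have hγB : 1/(B+2) ≤ γ := by
    have : 1/(B+2) ≤ 1/(B+1) := by
      apply one_div_le_one_div_of_le <;> linarith
    linarith
  have hq1 : (1:ℝ) ≤ (q:ℝ) := by exact_mod_cast hq
  have hPq := cfProd_one_le q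
  have hPqpos := cfProd_pos q
  have htriv : 1/((B+2) * cfProd q) ≤ 1/(B+2) := by
    apply one_div_le_one_div_of_le hB2
    nlinarith
  set ε := |(q:ℝ) * γ - (p:ℝ)| with hεdef
  have habs : (p:ℝ) - (q:ℝ)*γ ≤ ε := by
    rw [hεdef, abs_sub_comm]
    exact le_abs_self _
  rcases le_or_gt p 0 with hp0 | hp0
  · -- p ≤ 0 : ε ≥ qγ ≥ γ ≥ 1/(B+2)
    have hpr : (p:ℝ) ≤ 0 := by exact_mod_cast hp0
    have hε : γ ≤ ε := by
      have : γ ≤ (q:ℝ) * γ - (p:ℝ) := by nlinarith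
      exact le_trans this (le_abs_self _)
    calc 1/((B+2) * cfProd q) ≤ 1/(B+2) := htriv
      _ ≤ γ := hγB
      _ ≤ ε := hε
      _ ≤ (q:ℝ) * ε := by nlinarith [abs_nonneg ((q:ℝ) * γ - (p:ℝ))]
  rcases le_or_gt (q:ℤ) p with hpq | hpq
  · -- p ≥ q : ε ≥ q(1-γ) ≥ q/(B+2)
    have hub : γ < (B+1)/(B+2) := h.ub
    have h1γ : 1/(B+2) ≤ 1 - γ := by
      rw [div_le_iff₀ hB2]
      rw [lt_div_iff₀ hB2] at hub
      nlinarith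
    have hpr : (q:ℝ) ≤ (p:ℝ) := by exact_mod_cast hpq
    have hε : (q:ℝ) * (1 - γ) ≤ ε := by
      have : (q:ℝ) * (1-γ) ≤ (p:ℝ) - (q:ℝ)*γ := by nlinarith
      linarith
    have h1γ0 : (0:ℝ) ≤ 1 - γ := le_trans (le_of_lt (one_div_pos.2 hB2)) h1γ
    have hqq : (1:ℝ) ≤ (q:ℝ) * (q:ℝ) := by nlinarith
    calc 1/((B+2) * cfProd q) ≤ 1/(B+2) := htriv
      _ ≤ (q:ℝ) * ((q:ℝ) * (1 - γ)) := by nlinarith [mul_le_mul_of_nonneg_right hqq h1γ0]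
      _ ≤ (q:ℝ) * ε := by nlinarith
  · -- main case 1 ≤ p < q
    have hp1 : 1 ≤ p := hp0
    have hq2 : 2 ≤ q := by omega
    set pn : ℕ := p.toNat with hpndef
    have hpncast : ((pn:ℕ):ℤ) = p := Int.toNat_of_nonneg (by omega)
    have hpnr : ((pn:ℕ):ℝ) = (p:ℝ) := by exact_mod_cast congrArg (Int.cast : ℤ → ℝ) hpncast
    have hpn1 : 1 ≤ pn := by omega
    have hpnq : pn < q := by omega
    set a : ℤ := ⌊γ⁻¹⌋ with hadef
    set β : ℝ := gaussInv γ with hβdef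
    set p' : ℤ := (q:ℤ) - p * a with hp'def
    have hγne : γ ≠ 0 := ne_of_gt h0
    have hident : (q:ℝ) * γ - (p:ℝ) = -(γ * ((pn:ℝ) * β - (p':ℝ))) := by
      have hβeq : β = γ⁻¹ - (a:ℝ) := by
        simp only [hβdef, gaussInv, Int.fract, hadef]
      rw [hβeq, hpnr]
      push_cast [hp'def]
      field_simp
      ring
    have hεeq : ε = γ * |(pn:ℝ) * β - (p':ℝ)| := by
      rw [hεdef, hident, abs_neg, abs_mul, abs_of_pos h0]
    have hIH := ih pn hpnq hpn1 β h.gauss p'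
    have hPpn := cfProd_pos pn
    have hpnpos : (0:ℝ) < (pn:ℝ) := by exact_mod_cast hpn1
    have hd : 1 / ((B+2) * cfProd pn * (pn:ℝ)) ≤ |(pn:ℝ) * β - (p':ℝ)| := by
      rw [div_le_iff₀ (mul_pos (mul_pos hB2 hPpn) hpnpos)]
      rw [div_le_iff₀ (mul_pos hB2 hPpn)] at hIH
      calc (1:ℝ) ≤ (pn:ℝ) * |(pn:ℝ) * β - (p':ℝ)| * ((B+2) * cfProd pn) := hIH
        _ = |(pn:ℝ) * β - (p':ℝ)| * ((B+2) * cfProd pn * (pn:ℝ)) := by ring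
    by_cases hεcase : 1/((B+2) * (q:ℝ)) ≤ ε
    · calc 1/((B+2) * cfProd q) ≤ 1/(B+2) := htriv
        _ = (q:ℝ) * (1/((B+2) * (q:ℝ))) := by field_simp
        _ ≤ (q:ℝ) * ε := by nlinarith
    · push_neg at hεcase
      have hqpos : (0:ℝ) < (q:ℝ) := by linarith
      have hple : (pn:ℝ) ≤ (q:ℝ) * γ * (1 + 1/(q:ℝ)^2) := by
        have h2 : 1/((B+2) * (q:ℝ)) ≤ γ/(q:ℝ) := by
          rw [div_le_div_iff₀ (by positivity) hqpos]
          rw [div_le_iff₀ hB2] at hγB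
          nlinarith
        have h3 : (q:ℝ)*γ*(1 + 1/(q:ℝ)^2) = (q:ℝ)*γ + γ/(q:ℝ) := by
          field_simp
        rw [hpnr, h3]
        linarith
      obtain ⟨m, rfl⟩ : ∃ m, q = m + 1 := ⟨q - 1, by omega⟩
      have hm1 : 1 ≤ m := by omega
      have hPsucc : cfProd (m+1) = cfProd m * (1 + 1/((m:ℝ)+1)^2) := cfProd_succ m hm1
      have hcast : ((m+1 : ℕ):ℝ) = (m:ℝ) + 1 := by push_cast; ring
      rw [hcast] at hple hq1 hqpos ⊢
      have hpnm : cfProd pn ≤ cfProd m := cfProd_mono (by omega : pn ≤ m)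
      have hfac : (0:ℝ) < 1 + 1/((m:ℝ)+1)^2 := by positivity
      calc 1/((B+2) * cfProd (m+1))
          = 1/((B+2) * (cfProd pn * (1 + 1/((m:ℝ)+1)^2)) +
              (B+2) * (1 + 1/((m:ℝ)+1)^2) * (cfProd m - cfProd pn)) := by
            rw [hPsucc]; ring_nf
        _ ≤ 1/((B+2) * (cfProd pn * (1 + 1/((m:ℝ)+1)^2))) := by
            apply one_div_le_one_div_of_le (by positivity)
            nlinarith [mul_pos hB2 hfac]
        _ ≤ ((m:ℝ)+1) * γ / ((B+2) * cfProd pn * (pn:ℝ)) := by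
            rw [div_le_div_iff₀ (by positivity) (by positivity)]
            nlinarith [mul_le_mul_of_nonneg_left hple (le_of_lt (mul_pos hB2 hPpn))]
        _ = ((m:ℝ)+1) * γ * (1/((B+2) * cfProd pn * (pn:ℝ))) := by ring
        _ ≤ ((m:ℝ)+1) * γ * |(pn:ℝ) * β - (p':ℝ)| := by
            apply mul_le_mul_of_nonneg_left hd
            positivity
        _ = ((m:ℝ)+1) * ε := by rw [hεeq]; ring

lemma irrational_fract {x : ℝ} (h : Irrational x) : Irrational (Int.fract x) := by
  unfold Int.fract
  exact Irrational.sub_intCast h ⌊x⌋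

lemma irrational_gaussInv {x : ℝ} (h : Irrational x) : Irrational (gaussInv x) :=
  irrational_fract h.inv

lemma irrational_iter {γ : ℝ} (h : Irrational γ) (n : ℕ) : Irrational (gaussInv^[n] γ) := by
  induction n with
  | zero => simpa using h
  | succ n ih =>
    rw [Function.iterate_succ_apply']
    exact irrational_gaussInv ih

lemma stream_eq (α : ℝ) (hirr : Irrational α) (n : ℕ) :
    GenContFract.IntFractPair.stream α (n+1) =
      some ⟨⌊(gaussInv^[n] (Int.fract α))⁻¹⌋, gaussInv^[n+1] (Int.fract α)⟩ := by
  induction n with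
  | zero =>
    have h0 : GenContFract.IntFractPair.stream α 0 = some (GenContFract.IntFractPair.of α) :=
      GenContFract.IntFractPair.stream_zero α
    have hfr : (GenContFract.IntFractPair.of α).fr ≠ 0 := by
      simp only [GenContFract.IntFractPair.of]
      exact (irrational_fract hirr).ne_zero
    rw [GenContFract.IntFractPair.stream_succ_of_some h0 hfr]
    simp [GenContFract.IntFractPair.of, gaussInv]
  | succ n ih =>
    have hfr : Irrational (gaussInv^[n+1] (Int.fract α)) :=
      irrational_iter (irrational_fract hirr) (n+1)
    rw [GenContFract.IntFractPair.stream_succ_of_some ih hfr.ne_zero]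
    simp only [GenContFract.IntFractPair.of, gaussInv]
    rw [Function.iterate_succ_apply' gaussInv (n+1)]
    simp [gaussInv]

lemma goodCF_of_boundedCF {α : ℝ} (hirr : Irrational α) (hcf : BoundedCF α) :
    ∃ B : ℝ, GoodCF B (Int.fract α) := by
  obtain ⟨B, hB⟩ := hcf
  refine ⟨B, fun n => ?_⟩
  have hi : Irrational (gaussInv^[n] (Int.fract α)) := irrational_iter (irrational_fract hirr) n
  have hfract : ∃ y : ℝ, gaussInv^[n] (Int.fract α) = Int.fract y := by
    cases n with
    | zero => exact ⟨α, by simp⟩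
    | succ m =>
      rw [Function.iterate_succ_apply']
      exact ⟨(gaussInv^[m] (Int.fract α))⁻¹, rfl⟩
  obtain ⟨y, hy⟩ := hfract
  refine ⟨hi, ?_, ?_, ?_⟩
  · rw [hy]
    refine Int.fract_pos.2 fun hc => ?_
    have h2 : Irrational (Int.fract y) := by rw [← hy]; exact hi
    have h0 : Int.fract y = 0 := by rw [hc]; exact_mod_cast Int.fract_intCast ⌊y⌋
    exact h2.ne_zero h0
  · rw [hy]
    exact Int.fract_lt_one y
  · -- floor bound from hypothesis
    have hs := stream_eq α hirr n
    have hpartden := GenContFract.get?_of_eq_some_of_succ_get?_intFractPair_stream hs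
    have : (GenContFract.of α).partDens.get? n =
        some ((⌊(gaussInv^[n] (Int.fract α))⁻¹⌋ : ℤ) : ℝ) := by
      rw [GenContFract.partDens, Stream'.Seq.map_get?, hpartden]
      rfl
    exact hB n _ (by rw [this]; rfl)

lemma badApprox {α : ℝ} (hirr : Irrational α) (hcf : BoundedCF α) :
    ∃ c > (0:ℝ), ∀ n : ℕ, 1 ≤ n → ∀ p : ℤ, c / n ≤ |(n:ℝ) * α - p| := by
  obtain ⟨B, hG⟩ := goodCF_of_boundedCF hirr hcf
  have hB1 : (1:ℝ) ≤ B := le_trans (by exact_mod_cast hG.floor_pos) hG.self.2.2.2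
  have hB2 : (0:ℝ) < B + 2 := by linarith
  refine ⟨1/(3*(B+2)), by positivity, ?_⟩
  intro n hn p
  have hnpos : (0:ℝ) < n := by exact_mod_cast hn
  have hkey := keyLemma B n hn _ hG (p - n*⌊α⌋)
  have h3 := cfProd_le_three n
  have hPpos := cfProd_pos n
  have heq : (n:ℝ) * Int.fract α - ((p - n*⌊α⌋ : ℤ):ℝ) = (n:ℝ)*α - p := by
    push_cast [Int.fract]
    ring
  rw [heq] at hkey
  have h1 : 1/(3*(B+2)) ≤ 1/((B+2) * cfProd n) := by
    apply one_div_le_one_div_of_le (by positivity)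
    nlinarith
  rw [div_le_iff₀ hnpos]
  calc 1/(3*(B+2)) ≤ 1/((B+2)*cfProd n) := h1
    _ ≤ (n:ℝ) * |(n:ℝ)*α - p| := hkey
    _ = |(n:ℝ)*α - p| * n := by ring

/-- Lemma 2.4, first part. -/
theorem sum_inv_distNearestInt_le (α : ℝ) (hirr : Irrational α) (hcf : BoundedCF α) :
    ∃ C > (0:ℝ), ∀ K H N : ℕ, 1 ≤ K → 1 ≤ H → 1 ≤ N → K ≤ N → H ≤ N →
      ∑ l ∈ Finset.Icc 1 (Nat.log 2 K), ∑ h ∈ Finset.Icc 1 (H / 2 ^ l),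
          1 / ((h : ℝ) * distNearestInt (2 ^ l * α * h)) ≤
        C * H * Real.log K := by
  obtain ⟨c, hcpos, hbad⟩ := badApprox hirr hcf
  have hlog2 : 0 < Real.log 2 := Real.log_pos (by norm_num)
  refine ⟨1/(c * Real.log 2), by positivity, ?_⟩
  intro K H N hK hH hN hKN hHN
  set L := Nat.log 2 K with hL
  have hterm : ∀ l ∈ Finset.Icc 1 L, ∑ h ∈ Finset.Icc 1 (H / 2 ^ l),
      1 / ((h : ℝ) * distNearestInt (2 ^ l * α * h)) ≤ (H:ℝ)/c := by
    intro l _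
    have h2l : (0:ℝ) < (2:ℝ)^l := by positivity
    have hbound : ∀ h ∈ Finset.Icc 1 (H / 2 ^ l),
        1 / ((h : ℝ) * distNearestInt (2 ^ l * α * h)) ≤ (2:ℝ)^l/c := by
      intro h hh
      have hh1 : 1 ≤ h := (Finset.mem_Icc.1 hh).1
      have hhpos : (0:ℝ) < (h:ℝ) := by exact_mod_cast hh1
      have hn1 : 1 ≤ 2^l * h := Nat.one_le_iff_ne_zero.2 (by positivity)
      have hcast : ((2^l * h : ℕ):ℝ) = (2:ℝ)^l * (h:ℝ) := by push_cast; ring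
      have hdist : c/((2:ℝ)^l * (h:ℝ)) ≤ distNearestInt (2 ^ l * α * h) := by
        have hb := hbad (2^l * h) hn1 (round ((2:ℝ) ^ l * α * h))
        rw [hcast] at hb
        have hrw : ((2:ℝ)^l * (h:ℝ)) * α = 2 ^ l * α * h := by ring
        rw [hrw] at hb
        exact hb
      have hdpos : 0 < distNearestInt (2 ^ l * α * h) :=
        lt_of_lt_of_le (by positivity) hdist
      have hpd : c/(2:ℝ)^l ≤ (h:ℝ) * distNearestInt (2 ^ l * α * h) := by
        have h1 := mul_le_mul_of_nonneg_left hdist (le_of_lt hhpos)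
        have h2 : (h:ℝ) * (c/((2:ℝ)^l * (h:ℝ))) = c/(2:ℝ)^l := by
          field_simp
        linarith [h2 ▸ h1]
      calc 1 / ((h : ℝ) * distNearestInt (2 ^ l * α * h)) ≤ 1/(c/(2:ℝ)^l) :=
            one_div_le_one_div_of_le (by positivity) hpd
        _ = (2:ℝ)^l/c := one_div_div c ((2:ℝ)^l)
    calc ∑ h ∈ Finset.Icc 1 (H / 2 ^ l), 1 / ((h : ℝ) * distNearestInt (2 ^ l * α * h))
        ≤ ∑ h ∈ Finset.Icc 1 (H / 2 ^ l), (2:ℝ)^l/c := Finset.sum_le_sum hbound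
      _ = ((H / 2 ^ l : ℕ):ℝ) * ((2:ℝ)^l/c) := by
          rw [Finset.sum_const, Nat.card_Icc]
          simp [nsmul_eq_mul]
      _ = (((H / 2 ^ l : ℕ):ℝ) * (2:ℝ)^l)/c := by ring
      _ ≤ (H:ℝ)/c := by
          have hdm : ((H / 2 ^ l : ℕ):ℝ) * ((2^l : ℕ):ℝ) ≤ (H:ℝ) := by
            exact_mod_cast Nat.div_mul_le_self H (2^l)
          push_cast at hdm
          gcongr
  have hsum : ∑ l ∈ Finset.Icc 1 L, ∑ h ∈ Finset.Icc 1 (H / 2 ^ l),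
      1 / ((h : ℝ) * distNearestInt (2 ^ l * α * h)) ≤ (L:ℝ) * ((H:ℝ)/c) := by
    calc _ ≤ ∑ l ∈ Finset.Icc 1 L, (H:ℝ)/c := Finset.sum_le_sum hterm
      _ = (L:ℝ) * ((H:ℝ)/c) := by
          rw [Finset.sum_const, Nat.card_Icc]
          simp [nsmul_eq_mul]
  have hLlog : (L:ℝ) * Real.log 2 ≤ Real.log K := by
    rw [← Real.log_pow]
    apply Real.log_le_log (by positivity)
    exact_mod_cast Nat.pow_log_le_self 2 (by omega)
  have hHpos : (0:ℝ) ≤ (H:ℝ) := by positivity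
  calc ∑ l ∈ Finset.Icc 1 L, ∑ h ∈ Finset.Icc 1 (H / 2 ^ l),
        1 / ((h : ℝ) * distNearestInt (2 ^ l * α * h)) ≤ (L:ℝ) * ((H:ℝ)/c) := hsum
    _ = ((H:ℝ)/(c * Real.log 2)) * ((L:ℝ) * Real.log 2) := by
        field_simp
    _ ≤ ((H:ℝ)/(c * Real.log 2)) * Real.log K := by
        apply mul_le_mul_of_nonneg_left hLlog (by positivity)
    _ = 1/(c * Real.log 2) * H * Real.log K := by ring

end
end

section
/- For Lebesgue-almost every α ∈ (0,1) the following holds: for every ε > 0 there exist C > 0 and N₀ ∈ ℕ such that for all N ≥ N₀ and all positive integers K, H with K ≤ N and H ≤ N: Σ_{ℓ=1}^{⌊log₂K⌋} Σ_{h=1}^{⌊H/2^ℓ⌋} 1/(h·‖2^ℓ α h‖) ≤ C·N^ε. -/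
open Real MeasureTheory

noncomputable section

namespace AEProof

lemma dni_nonneg (t : ℝ) : 0 ≤ distNearestInt t := abs_nonneg _

lemma measurable_dni : Measurable distNearestInt := by
  have h1 : Measurable fun t : ℝ => ((round t : ℤ) : ℝ) := by
    have : Measurable fun t : ℝ => (⌊t + 1/2⌋ : ℤ) :=
      Int.measurable_floor.comp (measurable_id.add_const _)
    have h2 : Measurable ((↑) : ℤ → ℝ) := measurable_from_top
    simpa [round_eq, Function.comp_def] using h2.comp this
  exact (measurable_id.sub h1).abs

/-- The exponent used for truncation. -/
def JJ (N : ℕ) : ℕ := 3 * (Nat.log 2 N + 1)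

/-- The bad set for frequency `n` at dyadic scale `j`. -/
def Sset (n j : ℕ) : Set ℝ := {α : ℝ | distNearestInt ((n : ℝ) * α) < 1 / 2 ^ j}

lemma measurableSet_Sset (n j : ℕ) : MeasurableSet (Sset n j) :=
  (measurable_dni.comp (measurable_id.const_mul _)) measurableSet_Iio

/-- Dyadic indicator term. -/
def trm (n j : ℕ) (α : ℝ) : ℝ :=
  if distNearestInt ((n : ℝ) * α) < 1 / 2 ^ j then (2:ℝ) ^ (j + 1) else 0

lemma trm_nonneg (n j : ℕ) (α : ℝ) : 0 ≤ trm n j α := by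
  unfold trm; split <;> positivity

/-- Majorant of `1/‖nα‖` at truncation level `JJ N`. -/
def mj (N n : ℕ) (α : ℝ) : ℝ := 2 + ∑ j ∈ Finset.Icc 1 (JJ N), trm n j α

lemma mj_nonneg (N n : ℕ) (α : ℝ) : 0 ≤ mj N n α := by
  unfold mj
  have : 0 ≤ ∑ j ∈ Finset.Icc 1 (JJ N), trm n j α :=
    Finset.sum_nonneg fun j _ => trm_nonneg n j α
  linarith

/-- The dominating sum. -/
def FF (N : ℕ) (α : ℝ) : ℝ :=
  ∑ l ∈ Finset.Icc 1 (Nat.log 2 N), ∑ h ∈ Finset.Icc 1 (N / 2 ^ l),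
    (1 / (h:ℝ)) * mj N (2 ^ l * h) α

lemma pow_sum_aux (J : ℕ) : (2:ℝ) ^ (J + 1) ≤ 2 + ∑ j ∈ Finset.Icc 1 J, (2:ℝ) ^ (j + 1) := by
  induction J with
  | zero => simp
  | succ J ih =>
      rw [Finset.sum_Icc_succ_top (by omega : 1 ≤ J + 1)]
      have h0 : (0:ℝ) ≤ ∑ j ∈ Finset.Icc 1 J, (2:ℝ) ^ (j + 1) :=
        Finset.sum_nonneg fun j _ => by positivity
      linarith

/-- Key pointwise bound: if `d ≥ 2^{-J}` then `1/d ≤ 2 + Σ_j 2^{j+1} 1_{d < 2^{-j}}`. -/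
lemma key (J : ℕ) (d : ℝ) (hd : 1 / 2 ^ J ≤ d) :
    1 / d ≤ 2 + ∑ j ∈ Finset.Icc 1 J, (if d < 1 / 2 ^ j then (2:ℝ) ^ (j + 1) else 0) := by
  induction J with
  | zero =>
      simp only [pow_zero] at hd
      have : 1 / d ≤ 1 := by
        rw [div_le_one (by linarith : (0:ℝ) < d)]; linarith
      simpa using this.trans (by norm_num)
  | succ J ih =>
      by_cases hc : 1 / 2 ^ J ≤ d
      · have h1 := ih hc
        rw [Finset.sum_Icc_succ_top (by omega : 1 ≤ J + 1)]
        have h2 : (0:ℝ) ≤ if d < 1 / 2 ^ (J + 1) then (2:ℝ) ^ (J + 1 + 1) else 0 := by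
          split <;> positivity
        linarith
      · push_neg at hc
        have hd0 : 0 < d := lt_of_lt_of_le (by positivity) hd
        have h1 : 1 / d ≤ 2 ^ (J + 1) := by
          rw [div_le_iff₀ hd0]
          have : (1:ℝ) / 2 ^ (J + 1) * 2 ^ (J + 1) ≤ d * 2 ^ (J + 1) :=
            mul_le_mul_of_nonneg_right hd (by positivity)
          calc (1:ℝ) = 1 / 2 ^ (J + 1) * 2 ^ (J + 1) := by field_simp
            _ ≤ d * 2 ^ (J + 1) := this
            _ = 2 ^ (J + 1) * d := by ring
        have h2 : ∑ j ∈ Finset.Icc 1 J, (2:ℝ) ^ (j + 1) ≤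
            ∑ j ∈ Finset.Icc 1 (J + 1), (if d < 1 / 2 ^ j then (2:ℝ) ^ (j + 1) else 0) := by
          rw [Finset.sum_Icc_succ_top (by omega : 1 ≤ J + 1)]
          have h3 : ∑ j ∈ Finset.Icc 1 J, (2:ℝ) ^ (j + 1) =
              ∑ j ∈ Finset.Icc 1 J, (if d < 1 / 2 ^ j then (2:ℝ) ^ (j + 1) else 0) := by
            refine Finset.sum_congr rfl fun j hj => ?_
            rw [if_pos]
            refine lt_of_lt_of_le hc ?_
            apply one_div_le_one_div_of_le (by positivity)
            exact pow_le_pow_right₀ one_le_two (Finset.mem_Icc.mp hj).2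
          have h4 : (0:ℝ) ≤ if d < 1 / 2 ^ (J + 1) then (2:ℝ) ^ (J + 1 + 1) else 0 := by
            split <;> positivity
          linarith
        have h5 := pow_sum_aux J
        linarith

/-- Restricted Lebesgue measure on `(0,1)`. -/
def μ01 : Measure ℝ := volume.restrict (Set.Ioo 0 1)

lemma meas_Sset {n : ℕ} (hn : 1 ≤ n) (j : ℕ) :
    μ01 (Sset n j) ≤ ENNReal.ofReal (4 / 2 ^ j) := by
  have npos : (0:ℝ) < n := by exact_mod_cast hn
  set ε : ℝ := 1 / 2 ^ j with hε
  have hε0 : 0 < ε := by positivity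
  have cover : Sset n j ∩ Set.Ioo 0 1 ⊆
      ⋃ m ∈ Finset.range (n + 1), Metric.ball ((m : ℝ) / n) (ε / n) := by
    rintro α ⟨hS, hα0, hα1⟩
    have habs : |(n:ℝ) * α - (round ((n:ℝ) * α) : ℝ)| < ε := hS
    have hhalf : |(n:ℝ) * α - (round ((n:ℝ) * α) : ℝ)| ≤ 1 / 2 := abs_sub_round _
    set m₀ : ℤ := round ((n:ℝ) * α) with hm₀
    have hub : (m₀:ℝ) ≤ (n:ℝ) * α + 1/2 := by
      have := (abs_le.mp hhalf).1; linarith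
    have hlb : (n:ℝ) * α - 1/2 ≤ (m₀:ℝ) := by
      have := (abs_le.mp hhalf).2; linarith
    have hnα0 : 0 < (n:ℝ) * α := by positivity
    have hnα1 : (n:ℝ) * α < n := by
      nlinarith
    have hm0 : 0 ≤ m₀ := by
      have h : (-1:ℝ) < (m₀:ℝ) := by linarith
      have h' : (-1:ℤ) < m₀ := by exact_mod_cast h
      omega
    have hmn : m₀ ≤ (n:ℤ) := by
      have h : (m₀:ℝ) < ((n:ℤ):ℝ) + 1 := by push_cast; linarith
      have h' : m₀ < (n:ℤ) + 1 := by exact_mod_cast h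
      omega
    have hmem : m₀.toNat ∈ Finset.range (n + 1) := Finset.mem_range.mpr (by omega)
    have hball : α ∈ Metric.ball ((m₀.toNat : ℝ) / n) (ε / n) := by
      have hcast : ((m₀.toNat : ℕ) : ℝ) = (m₀ : ℝ) := by
        exact_mod_cast congrArg (Int.cast : ℤ → ℝ) (Int.toNat_of_nonneg hm0)
      rw [Metric.mem_ball, Real.dist_eq, hcast]
      have heq : α - (m₀:ℝ) / n = ((n:ℝ) * α - m₀) / n := by field_simp
      rw [heq, abs_div, abs_of_pos npos]
      gcongr
    exact Set.mem_biUnion hmem hball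
  have hreal : ((n:ℝ) + 1) * (2 * (ε / n)) ≤ 4 / 2 ^ j := by
    have hn1 : (1:ℝ) ≤ n := by exact_mod_cast hn
    have heq : ((n:ℝ) + 1) * (2 * (ε / n)) = (((n:ℝ) + 1) / n) * (2 * ε) := by
      field_simp
    have hq : ((n:ℝ) + 1) / n ≤ 2 := by
      rw [div_le_iff₀ npos]; linarith
    calc ((n:ℝ) + 1) * (2 * (ε / n)) = (((n:ℝ) + 1) / n) * (2 * ε) := heq
      _ ≤ 2 * (2 * ε) := by
          apply mul_le_mul_of_nonneg_right hq (by positivity)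
      _ = 4 / 2 ^ j := by rw [hε]; ring
  calc μ01 (Sset n j) = volume (Sset n j ∩ Set.Ioo 0 1) :=
        Measure.restrict_apply (measurableSet_Sset n j)
    _ ≤ volume (⋃ m ∈ Finset.range (n + 1), Metric.ball ((m:ℝ)/n) (ε/n)) :=
        measure_mono cover
    _ ≤ ∑ m ∈ Finset.range (n + 1), volume (Metric.ball ((m:ℝ)/n) (ε/n)) :=
        measure_biUnion_finset_le _ _
    _ = ∑ m ∈ Finset.range (n + 1), ENNReal.ofReal (2 * (ε/n)) := by
        simp [Real.volume_ball]
    _ = ((n + 1 : ℕ) : ENNReal) * ENNReal.ofReal (2 * (ε/n)) := by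
        rw [Finset.sum_const, Finset.card_range, nsmul_eq_mul]
    _ = ENNReal.ofReal (((n:ℝ) + 1) * (2 * (ε/n))) := by
        rw [← ENNReal.ofReal_natCast (n + 1), ← ENNReal.ofReal_mul (by positivity)]
        push_cast; ring_nf
    _ ≤ ENNReal.ofReal (4 / 2 ^ j) := ENNReal.ofReal_le_ofReal hreal

lemma hsum (k : ℕ) : ∑ h ∈ Finset.Icc 1 (2 ^ k : ℕ), (1:ℝ) / (h:ℝ) ≤ k + 1 := by
  induction k with
  | zero => simp
  | succ k ih =>
      have e1 : ∀ m : ℕ, Finset.Icc 1 m = Finset.Ioc 0 m := fun m => by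
        ext x; simp [Nat.lt_iff_add_one_le]
      have hsplit := Finset.sum_Ioc_consecutive (fun h : ℕ => (1:ℝ)/h)
        (Nat.zero_le (2^k)) (Nat.pow_le_pow_right (by norm_num) (Nat.le_succ k))
      have hupper : ∑ h ∈ Finset.Ioc (2^k : ℕ) (2^(k+1)), (1:ℝ)/(h:ℝ) ≤ 1 := by
        have hb : ∀ h ∈ Finset.Ioc (2^k : ℕ) (2^(k+1)), (1:ℝ)/(h:ℝ) ≤ 1/((2:ℝ)^k) := by
          intro h hh
          have h1 : (2^k : ℕ) < h := (Finset.mem_Ioc.mp hh).1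
          have h2 : ((2:ℝ)^k) ≤ (h:ℝ) := by exact_mod_cast h1.le
          exact one_div_le_one_div_of_le (by positivity) h2
        calc ∑ h ∈ Finset.Ioc (2^k : ℕ) (2^(k+1)), (1:ℝ)/(h:ℝ)
            ≤ (Finset.Ioc (2^k : ℕ) (2^(k+1))).card • (1/((2:ℝ)^k)) :=
              Finset.sum_le_card_nsmul _ _ _ hb
          _ = ((2^(k+1) - 2^k : ℕ) : ℝ) * (1/((2:ℝ)^k)) := by
              rw [Nat.card_Ioc, nsmul_eq_mul]
          _ = 1 := by
              have h3 : (2^(k+1) - 2^k : ℕ) = 2^k := by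
                rw [pow_succ]; omega
              rw [h3]; push_cast; field_simp
      rw [e1] at ih ⊢
      calc ∑ h ∈ Finset.Ioc (0:ℕ) (2^(k+1)), (1:ℝ)/(h:ℝ)
          = ∑ i ∈ Finset.Ioc (0:ℕ) (2^k), (1:ℝ)/(i:ℝ)
            + ∑ i ∈ Finset.Ioc (2^k:ℕ) (2^(k+1)), (1:ℝ)/(i:ℝ) := hsplit.symm
        _ ≤ ((k:ℝ) + 1) + 1 := add_le_add ih hupper
        _ = ((k+1:ℕ):ℝ) + 1 := by push_cast; ring

lemma dominate (M K H : ℕ) (α : ℝ)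
    (hgood : ∀ n : ℕ, 1 ≤ n → n ≤ M → 1 / 2 ^ (JJ M) ≤ distNearestInt ((n:ℝ) * α))
    (hK : K ≤ M) (hH : H ≤ M) :
    ∑ l ∈ Finset.Icc 1 (Nat.log 2 K), ∑ h ∈ Finset.Icc 1 (H / 2 ^ l),
        1 / ((h : ℝ) * distNearestInt (2 ^ l * α * h)) ≤ FF M α := by
  have hterm : ∀ l : ℕ, 1 ≤ l → ∀ h ∈ Finset.Icc 1 (H / 2^l),
      1 / ((h:ℝ) * distNearestInt (2^l * α * h)) ≤ (1/(h:ℝ)) * mj M (2^l * h) α := by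
    intro l _ h hh
    obtain ⟨h1, h2⟩ := Finset.mem_Icc.mp hh
    have hp : 0 < (2:ℕ)^l := Nat.pow_pos (by norm_num)
    have hn1 : 1 ≤ 2^l * h := Nat.one_le_iff_ne_zero.mpr (by positivity)
    have hnM : 2^l * h ≤ M := by
      have := (Nat.le_div_iff_mul_le hp).mp h2
      calc 2^l * h = h * 2^l := Nat.mul_comm _ _
        _ ≤ H := this
        _ ≤ M := hH
    have harg : (2:ℝ)^l * α * (h:ℝ) = (((2^l * h : ℕ) : ℝ)) * α := by push_cast; ring
    rw [harg]
    have hd := hgood _ hn1 hnM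
    have hd0 : (0:ℝ) < distNearestInt (((2^l * h : ℕ):ℝ) * α) :=
      lt_of_lt_of_le (by positivity) hd
    have hkey := key (JJ M) _ hd
    have hsplitdiv : 1 / ((h:ℝ) * distNearestInt (((2^l * h : ℕ):ℝ) * α))
        = (1/(h:ℝ)) * (1 / distNearestInt (((2^l * h : ℕ):ℝ) * α)) := by
      rw [one_div, mul_inv, one_div, one_div]
    rw [hsplitdiv]
    apply mul_le_mul_of_nonneg_left _ (by positivity)
    unfold mj trm
    exact hkey
  calc ∑ l ∈ Finset.Icc 1 (Nat.log 2 K), ∑ h ∈ Finset.Icc 1 (H / 2 ^ l),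
        1 / ((h : ℝ) * distNearestInt (2 ^ l * α * h))
      ≤ ∑ l ∈ Finset.Icc 1 (Nat.log 2 K), ∑ h ∈ Finset.Icc 1 (H / 2 ^ l),
        (1/(h:ℝ)) * mj M (2^l * h) α := by
        refine Finset.sum_le_sum fun l hl => Finset.sum_le_sum fun h hh => ?_
        exact hterm l (Finset.mem_Icc.mp hl).1 h hh
    _ ≤ ∑ l ∈ Finset.Icc 1 (Nat.log 2 K), ∑ h ∈ Finset.Icc 1 (M / 2 ^ l),
        (1/(h:ℝ)) * mj M (2^l * h) α := by
        refine Finset.sum_le_sum fun l _ => ?_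
        refine Finset.sum_le_sum_of_subset_of_nonneg
          (Finset.Icc_subset_Icc_right (Nat.div_le_div_right hH)) fun h _ _ => ?_
        have := mj_nonneg M (2^l * h) α
        positivity
    _ ≤ FF M α := by
        unfold FF
        refine Finset.sum_le_sum_of_subset_of_nonneg
          (Finset.Icc_subset_Icc_right (Nat.log_mono_right hK)) fun l _ _ => ?_
        refine Finset.sum_nonneg fun h _ => ?_
        have := mj_nonneg M (2^l * h) α
        positivity

lemma measurable_trm (n j : ℕ) : Measurable (trm n j) := by
  unfold trm
  exact Measurable.ite (measurableSet_Sset n j) measurable_const measurable_const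

lemma measurable_mj (N n : ℕ) : Measurable (mj N n) := by
  unfold mj
  exact measurable_const.add (Finset.measurable_sum _ fun j _ => measurable_trm n j)

lemma lint_trm {n : ℕ} (hn : 1 ≤ n) (j : ℕ) :
    ∫⁻ α, ENNReal.ofReal (trm n j α) ∂μ01 ≤ ENNReal.ofReal 8 := by
  have heq : (fun α => ENNReal.ofReal (trm n j α))
      = (Sset n j).indicator (fun _ => ENNReal.ofReal ((2:ℝ)^(j+1))) := by
    funext α
    unfold trm
    by_cases hmem : α ∈ Sset n j
    · rw [Set.indicator_of_mem hmem, if_pos (by exact hmem)]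
    · rw [Set.indicator_of_notMem hmem, if_neg (by exact hmem)]
      simp
  calc ∫⁻ α, ENNReal.ofReal (trm n j α) ∂μ01
      = ∫⁻ α, (Sset n j).indicator (fun _ => ENNReal.ofReal ((2:ℝ)^(j+1))) α ∂μ01 :=
        lintegral_congr fun α => congrFun heq α
    _ = ENNReal.ofReal ((2:ℝ)^(j+1)) * μ01 (Sset n j) := by
        rw [lintegral_indicator (measurableSet_Sset n j), setLIntegral_const]
    _
      ≤ ENNReal.ofReal ((2:ℝ)^(j+1)) * ENNReal.ofReal (4 / 2^j) :=
        mul_le_mul_right (meas_Sset hn j) _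
    _ = ENNReal.ofReal ((2:ℝ)^(j+1) * (4 / 2^j)) :=
        (ENNReal.ofReal_mul (by positivity)).symm
    _ = ENNReal.ofReal 8 := by
        congr 1
        rw [pow_succ]
        field_simp
        ring

lemma lint_mj (N : ℕ) {n : ℕ} (hn : 1 ≤ n) :
    ∫⁻ α, ENNReal.ofReal (mj N n α) ∂μ01 ≤ ENNReal.ofReal (2 + 8 * (JJ N : ℝ)) := by
  have hμuniv : μ01 Set.univ = 1 := by
    rw [μ01, Measure.restrict_apply_univ, Real.volume_Ioo]
    norm_num
  have heq : ∀ α, ENNReal.ofReal (mj N n α)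
      = ENNReal.ofReal 2 + ∑ j ∈ Finset.Icc 1 (JJ N), ENNReal.ofReal (trm n j α) := by
    intro α
    unfold mj
    rw [ENNReal.ofReal_add (by norm_num) (Finset.sum_nonneg fun j _ => trm_nonneg n j α),
      ENNReal.ofReal_sum_of_nonneg fun j _ => trm_nonneg n j α]
  calc ∫⁻ α, ENNReal.ofReal (mj N n α) ∂μ01
      = ∫⁻ α, (ENNReal.ofReal 2
          + ∑ j ∈ Finset.Icc 1 (JJ N), ENNReal.ofReal (trm n j α)) ∂μ01 :=
        lintegral_congr heq
    _ = ENNReal.ofReal 2 * μ01 Set.univ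
        + ∑ j ∈ Finset.Icc 1 (JJ N), ∫⁻ α, ENNReal.ofReal (trm n j α) ∂μ01 := by
        rw [lintegral_add_left measurable_const,
          lintegral_finset_sum _ fun j _ => (measurable_trm n j).ennreal_ofReal,
          lintegral_const]
    _ ≤ ENNReal.ofReal 2 * 1 + ∑ j ∈ Finset.Icc 1 (JJ N), ENNReal.ofReal 8 := by
        rw [hμuniv]
        exact add_le_add le_rfl (Finset.sum_le_sum fun j _ => lint_trm hn j)
    _ = ENNReal.ofReal 2 + ENNReal.ofReal ((JJ N : ℝ) * 8) := by
        rw [Finset.sum_const, Nat.card_Icc, mul_one]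
        congr 1
        rw [nsmul_eq_mul]
        have : (JJ N + 1 - 1 : ℕ) = JJ N := by omega
        rw [this, ← ENNReal.ofReal_natCast (JJ N), ← ENNReal.ofReal_mul (by positivity)]
    _ = ENNReal.ofReal (2 + 8 * (JJ N : ℝ)) := by
        rw [← ENNReal.ofReal_add (by norm_num) (by positivity)]
        ring_nf

lemma JJ_pow (k : ℕ) : (JJ (2^k) : ℝ) = 3 * ((k:ℝ) + 1) := by
  unfold JJ
  rw [Nat.log_pow (by norm_num)]
  push_cast; ring

lemma lint_FF (k : ℕ) :
    ∫⁻ α, ENNReal.ofReal (FF (2^k) α) ∂μ01 ≤ ENNReal.ofReal (26 * ((k:ℝ)+1)^3) := by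
  have hlog : Nat.log 2 (2^k) = k := Nat.log_pow (by norm_num) k
  have hterm_nonneg : ∀ (l h : ℕ) (α : ℝ), 0 ≤ (1/(h:ℝ)) * mj (2^k) (2^l*h) α :=
    fun l h α => mul_nonneg (by positivity) (mj_nonneg _ _ _)
  have hpt : ∀ α, ENNReal.ofReal (FF (2^k) α)
      = ∑ l ∈ Finset.Icc 1 k, ∑ h ∈ Finset.Icc 1 (2^k / 2^l : ℕ),
          ENNReal.ofReal ((1/(h:ℝ)) * mj (2^k) (2^l*h) α) := by
    intro α
    unfold FF
    rw [hlog,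
      ENNReal.ofReal_sum_of_nonneg (fun l _ => Finset.sum_nonneg fun h _ => hterm_nonneg l h α)]
    exact Finset.sum_congr rfl fun l _ =>
      ENNReal.ofReal_sum_of_nonneg (fun h _ => hterm_nonneg l h α)
  have hC : (0:ℝ) ≤ 2 + 8 * (JJ (2^k) : ℝ) := by positivity
  calc ∫⁻ α, ENNReal.ofReal (FF (2^k) α) ∂μ01
      = ∑ l ∈ Finset.Icc 1 k, ∑ h ∈ Finset.Icc 1 (2^k / 2^l : ℕ),
          ∫⁻ α, ENNReal.ofReal ((1/(h:ℝ)) * mj (2^k) (2^l*h) α) ∂μ01 := by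
        rw [lintegral_congr hpt,
          lintegral_finset_sum _ (fun l _ => Finset.measurable_sum _ fun h _ =>
            ((measurable_mj _ _).const_mul _).ennreal_ofReal)]
        exact Finset.sum_congr rfl fun l _ => lintegral_finset_sum _ fun h _ =>
          ((measurable_mj _ _).const_mul _).ennreal_ofReal
    _ ≤ ∑ l ∈ Finset.Icc 1 k, ∑ h ∈ Finset.Icc 1 (2^k / 2^l : ℕ),
          ENNReal.ofReal (1/(h:ℝ)) * ENNReal.ofReal (2 + 8 * (JJ (2^k) : ℝ)) := by
        refine Finset.sum_le_sum fun l _ => Finset.sum_le_sum fun h hh => ?_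
        have h1 : 1 ≤ h := (Finset.mem_Icc.mp hh).1
        have hn1 : 1 ≤ 2^l * h := Nat.one_le_iff_ne_zero.mpr (by positivity)
        have hmul : ∀ α, ENNReal.ofReal ((1/(h:ℝ)) * mj (2^k) (2^l*h) α)
            = ENNReal.ofReal (1/(h:ℝ)) * ENNReal.ofReal (mj (2^k) (2^l*h) α) :=
          fun α => ENNReal.ofReal_mul (by positivity)
        rw [lintegral_congr hmul,
          lintegral_const_mul _ (measurable_mj _ _).ennreal_ofReal]
        exact mul_le_mul_right (lint_mj (2^k) hn1) _
    _ = ∑ l ∈ Finset.Icc 1 k,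
          (∑ h ∈ Finset.Icc 1 (2^k / 2^l : ℕ), ENNReal.ofReal (1/(h:ℝ)))
            * ENNReal.ofReal (2 + 8 * (JJ (2^k) : ℝ)) := by
        exact Finset.sum_congr rfl fun l _ => (Finset.sum_mul _ _ _).symm
    _ ≤ ∑ l ∈ Finset.Icc 1 k,
          ENNReal.ofReal ((k:ℝ) + 1) * ENNReal.ofReal (2 + 8 * (JJ (2^k) : ℝ)) := by
        refine Finset.sum_le_sum fun l _ => ?_
        refine mul_le_mul_left ?_ _
        have hsub : ∑ h ∈ Finset.Icc 1 (2^k / 2^l : ℕ), (1:ℝ)/(h:ℝ) ≤ (k:ℝ) + 1 := by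
          refine le_trans (Finset.sum_le_sum_of_subset_of_nonneg
            (Finset.Icc_subset_Icc_right (Nat.div_le_self _ _))
            (fun h _ _ => by positivity)) (hsum k)
        calc ∑ h ∈ Finset.Icc 1 (2^k / 2^l : ℕ), ENNReal.ofReal (1/(h:ℝ))
            = ENNReal.ofReal (∑ h ∈ Finset.Icc 1 (2^k / 2^l : ℕ), (1:ℝ)/(h:ℝ)) :=
              (ENNReal.ofReal_sum_of_nonneg fun h _ => by positivity).symm
          _ ≤ ENNReal.ofReal ((k:ℝ) + 1) := ENNReal.ofReal_le_ofReal hsub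
    _ ≤ ENNReal.ofReal (26 * ((k:ℝ)+1)^3) := by
        rw [Finset.sum_const, Nat.card_Icc]
        have hcard : (k + 1 - 1 : ℕ) = k := by omega
        rw [hcard, nsmul_eq_mul, ← ENNReal.ofReal_natCast k,
          ← ENNReal.ofReal_mul (by positivity), ← ENNReal.ofReal_mul (by positivity)]
        apply ENNReal.ofReal_le_ofReal
        rw [JJ_pow]
        have hk1 : (0:ℝ) ≤ (k:ℝ) := Nat.cast_nonneg k
        nlinarith [sq_nonneg ((k:ℝ)+1), sq_nonneg (k:ℝ)]

lemma measurable_FF (N : ℕ) : Measurable (FF N) := by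
  unfold FF
  exact Finset.measurable_sum _ fun l _ =>
    Finset.measurable_sum _ fun h _ => (measurable_mj _ _).const_mul _

lemma two_pow_JJ_ge (n : ℕ) : ((n:ℝ) + 1) ^ 2 ≤ 2 ^ (JJ n) := by
  have h1 : n + 1 ≤ 2 ^ (Nat.log 2 n + 1) := Nat.lt_pow_succ_log_self (by norm_num) n
  have h2 : (n + 1) ^ 2 ≤ (2 ^ (Nat.log 2 n + 1)) ^ 3 := by
    calc (n + 1) ^ 2 ≤ (n + 1) ^ 3 := Nat.pow_le_pow_right (by omega) (by norm_num)
      _ ≤ (2 ^ (Nat.log 2 n + 1)) ^ 3 := Nat.pow_le_pow_left h1 3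
  have h3 : (2 ^ (Nat.log 2 n + 1)) ^ 3 = 2 ^ (JJ n) := by
    rw [← pow_mul]
    congr 1
    unfold JJ
    ring
  have := h3 ▸ h2
  exact_mod_cast this

lemma ae_pos_dni : ∀ᵐ α ∂μ01, ∀ n : ℕ, 1 ≤ n → 0 < distNearestInt ((n:ℝ) * α) := by
  rw [ae_iff]
  have hsub : {α : ℝ | ¬ ∀ n : ℕ, 1 ≤ n → 0 < distNearestInt ((n:ℝ)*α)}
      ⊆ Set.range ((↑) : ℚ → ℝ) := by
    intro α hα
    simp only [Set.mem_setOf_eq, not_forall] at hα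
    obtain ⟨n, hn, hd⟩ := hα
    push_neg at hd
    have h0 : distNearestInt ((n:ℝ)*α) = 0 := le_antisymm hd (dni_nonneg _)
    have heq : (n:ℝ)*α = (round ((n:ℝ)*α) : ℝ) := by
      have := abs_eq_zero.mp h0; linarith
    have hn0 : (n:ℝ) ≠ 0 := by positivity
    refine ⟨((round ((n:ℝ)*α) : ℤ) : ℚ) / (n : ℚ), ?_⟩
    push_cast
    rw [div_eq_iff hn0]
    linarith [heq]
  have h0 : volume {α : ℝ | ¬ ∀ n : ℕ, 1 ≤ n → 0 < distNearestInt ((n:ℝ)*α)} = 0 :=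
    measure_mono_null hsub ((Set.countable_range _).measure_zero _)
  have hle := Measure.restrict_le_self
    (μ := volume) (s := Set.Ioo (0:ℝ) 1)
  exact le_antisymm ((Measure.le_iff'.mp hle _).trans h0.le) zero_le

lemma summable_inv_sq : Summable (fun n : ℕ => 4 / ((n:ℝ) + 1) ^ 2) := by
  have base : Summable (fun n : ℕ => 1 / (n:ℝ) ^ 2) :=
    summable_one_div_nat_pow.mpr (by norm_num)
  have h1 : Summable (fun n : ℕ => 1 / ((n:ℝ) + 1) ^ 2) := by
    have := (summable_nat_add_iff 1).mpr base
    refine this.congr fun n => ?_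
    push_cast
    ring
  simpa [div_eq_mul_inv, mul_comm] using h1.mul_left 4

lemma meas_Sset_JJ (n : ℕ) : μ01 (Sset n (JJ n)) ≤ ENNReal.ofReal (4 / ((n:ℝ)+1)^2) := by
  rcases Nat.eq_zero_or_pos n with h0 | hpos
  · subst h0
    calc μ01 (Sset 0 (JJ 0)) ≤ μ01 Set.univ := measure_mono (Set.subset_univ _)
      _ = 1 := by rw [μ01, Measure.restrict_apply_univ, Real.volume_Ioo]; norm_num
      _ ≤ _ := by
          rw [show (((0:ℕ):ℝ) + 1)^2 = 1 by norm_num]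
          rw [show (4:ℝ)/1 = 4 by norm_num]
          exact ENNReal.one_le_ofReal.mpr (by norm_num)
  · refine (meas_Sset hpos (JJ n)).trans (ENNReal.ofReal_le_ofReal ?_)
    have h2 := two_pow_JJ_ge n
    have hp : (0:ℝ) < ((n:ℝ)+1)^2 := by positivity
    exact div_le_div_of_nonneg_left (by norm_num) hp h2 |>.trans_eq rfl

lemma ae_eventually_good :
    ∀ᵐ α ∂μ01, ∀ᶠ n : ℕ in Filter.atTop, ¬ (α ∈ Sset n (JJ n)) := by
  apply ae_eventually_notMem
  have hle : ∑' n : ℕ, μ01 (Sset n (JJ n))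
      ≤ ∑' n : ℕ, ENNReal.ofReal (4 / ((n:ℝ)+1)^2) :=
    ENNReal.tsum_le_tsum fun n => meas_Sset_JJ n
  have heq : ∑' n : ℕ, ENNReal.ofReal (4 / ((n:ℝ)+1)^2)
      = ENNReal.ofReal (∑' n : ℕ, 4 / ((n:ℝ)+1)^2) :=
    (ENNReal.ofReal_tsum_of_nonneg (fun n => by positivity) summable_inv_sq).symm
  exact ne_top_of_le_ne_top (by rw [heq]; exact ENNReal.ofReal_ne_top) hle

set_option maxHeartbeats 1000000 in
lemma ae_FF_small (m : ℕ) :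
    ∀ᵐ α ∂μ01, ∀ᶠ k : ℕ in Filter.atTop,
      ¬ (α ∈ {β : ℝ | ((2:ℝ)^k) ^ (1/((m:ℝ)+1) : ℝ) ≤ FF (2^k) β}) := by
  set e : ℝ := 1/((m:ℝ)+1) with he
  have he0 : 0 < e := by positivity
  set r : ℝ := (2:ℝ) ^ (-e) with hr
  have hr0 : 0 < r := Real.rpow_pos_of_pos two_pos _
  have hr1 : r < 1 := Real.rpow_lt_one_of_one_lt_of_neg one_lt_two (by linarith)
  have hrk : ∀ k : ℕ, ((2:ℝ)^k) ^ e * r ^ k = 1 := by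
    intro k
    rw [hr, ← Real.rpow_natCast ((2:ℝ)^(-e)) k, ← Real.rpow_natCast (2:ℝ) k,
      ← Real.rpow_mul (by norm_num), ← Real.rpow_mul (by norm_num),
      ← Real.rpow_add (by norm_num)]
    rw [show (k:ℝ) * e + -e * (k:ℝ) = 0 by ring, Real.rpow_zero]
  have hmeas : ∀ k : ℕ,
      μ01 {β : ℝ | ((2:ℝ)^k) ^ e ≤ FF (2^k) β}
        ≤ ENNReal.ofReal (26 * ((k:ℝ)+1)^3 * r^k) := by
    intro k
    set t : ℝ := ((2:ℝ)^k) ^ e with ht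
    have ht0 : 0 < t := Real.rpow_pos_of_pos (by positivity) _
    have hsub : {β : ℝ | t ≤ FF (2^k) β}
        ⊆ {β : ℝ | ENNReal.ofReal t ≤ ENNReal.ofReal (FF (2^k) β)} :=
      fun β hβ => ENNReal.ofReal_le_ofReal hβ
    calc μ01 {β : ℝ | t ≤ FF (2^k) β}
        ≤ μ01 {β : ℝ | ENNReal.ofReal t ≤ ENNReal.ofReal (FF (2^k) β)} :=
          measure_mono hsub
      _ ≤ (∫⁻ β, ENNReal.ofReal (FF (2^k) β) ∂μ01) / ENNReal.ofReal t :=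
          meas_ge_le_lintegral_div ((measurable_FF _).ennreal_ofReal).aemeasurable
            (ENNReal.ofReal_pos.mpr ht0).ne' ENNReal.ofReal_ne_top
      _ ≤ ENNReal.ofReal (26 * ((k:ℝ)+1)^3) / ENNReal.ofReal t :=
          ENNReal.div_le_div_right (lint_FF k) _
      _ = ENNReal.ofReal (26 * ((k:ℝ)+1)^3 / t) :=
          (ENNReal.ofReal_div_of_pos ht0).symm
      _ = ENNReal.ofReal (26 * ((k:ℝ)+1)^3 * r^k) := by
          congr 1
          have h1 : t * r ^ k = 1 := by rw [ht]; exact hrk k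
          rw [div_eq_iff ht0.ne', mul_assoc, mul_comm (r^k) t, h1, mul_one]
  have hsummable : Summable (fun k : ℕ => 26 * ((k:ℝ)+1)^3 * r^k) := by
    have base : Summable (fun n : ℕ => (n:ℝ)^3 * r^n) :=
      summable_pow_mul_geometric_of_norm_lt_one 3
        (by rw [Real.norm_eq_abs, abs_of_pos hr0]; exact hr1)
    have h1 : Summable (fun n : ℕ => (((n+1:ℕ)):ℝ)^3 * r^(n+1)) :=
      (summable_nat_add_iff 1).mpr base
    have h2 : Summable (fun n : ℕ => ((n:ℝ)+1)^3 * r^n) := by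
      have := h1.mul_left r⁻¹
      refine this.congr fun n => ?_
      push_cast
      field_simp
      ring
    simpa [mul_assoc] using h2.mul_left 26
  apply ae_eventually_notMem
  have hle := ENNReal.tsum_le_tsum hmeas
  have heq : ∑' k : ℕ, ENNReal.ofReal (26 * ((k:ℝ)+1)^3 * r^k)
      = ENNReal.ofReal (∑' k : ℕ, 26 * ((k:ℝ)+1)^3 * r^k) :=
    (ENNReal.ofReal_tsum_of_nonneg (fun k => by positivity) hsummable).symm
  exact ne_top_of_le_ne_top (by rw [heq]; exact ENNReal.ofReal_ne_top) hle

end AEProof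

/-- Lemma 2.4, second part: for almost every `α ∈ (0,1)`, for every `ε > 0`,
`Σ_{ℓ=1}^{⌊log₂ K⌋} Σ_{h=1}^{⌊H/2^ℓ⌋} 1/(h ‖2^ℓ α h‖) ≤ C·N^ε` for all large `N`
and all `K, H ≤ N`. -/
theorem sum_inv_distNearestInt_ae :
    ∀ᵐ α ∂(volume : Measure ℝ), α ∈ Set.Ioo (0:ℝ) 1 →
      ∀ ε > (0:ℝ), ∃ C > (0:ℝ), ∃ N₀ : ℕ, ∀ N : ℕ, N₀ ≤ N →
        ∀ K H : ℕ, 1 ≤ K → 1 ≤ H → K ≤ N → H ≤ N →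
          ∑ l ∈ Finset.Icc 1 (Nat.log 2 K), ∑ h ∈ Finset.Icc 1 (H / 2 ^ l),
              1 / ((h : ℝ) * distNearestInt (2 ^ l * α * h)) ≤
            C * (N : ℝ) ^ ε := by
  rw [← ae_restrict_iff' measurableSet_Ioo]
  have hall : ∀ᵐ α ∂AEProof.μ01, ∀ m : ℕ, ∀ᶠ k : ℕ in Filter.atTop,
      ¬ (α ∈ {β : ℝ | ((2:ℝ)^k) ^ (1/((m:ℝ)+1) : ℝ) ≤ AEProof.FF (2^k) β}) :=
    ae_all_iff.mpr AEProof.ae_FF_small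
  filter_upwards [AEProof.ae_pos_dni, AEProof.ae_eventually_good, hall] with α h1 h2 h3
  intro ε hε
  obtain ⟨m, hm⟩ := exists_nat_one_div_lt hε
  set e : ℝ := 1/((m:ℝ)+1) with he_def
  have he0 : 0 < e := by positivity
  have he1 : e ≤ 1 := by
    rw [he_def, div_le_one (by positivity)]
    have : (0:ℝ) ≤ (m:ℝ) := Nat.cast_nonneg m
    linarith
  obtain ⟨n₁', hn₁'⟩ := Filter.eventually_atTop.mp h2
  set n₁ := max n₁' 1 with hn₁_def
  have hne : (Finset.Icc 1 n₁).Nonempty := ⟨1, Finset.mem_Icc.mpr ⟨le_refl 1, le_max_right _ _⟩⟩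
  set c := (Finset.Icc 1 n₁).inf' hne (fun n => distNearestInt ((n:ℝ)*α)) with hc_def
  have hc0 : 0 < c := by
    rw [hc_def, Finset.lt_inf'_iff]
    intro n hn
    exact h1 n (Finset.mem_Icc.mp hn).1
  set N₁ := max n₁ (⌈1/c⌉₊ + 1) with hN₁_def
  have hgood : ∀ M : ℕ, N₁ ≤ M → ∀ n : ℕ, 1 ≤ n → n ≤ M →
      1/2^(AEProof.JJ M) ≤ distNearestInt ((n:ℝ)*α) := by
    intro M hM n hn1 hnM
    by_cases hcase : n₁ ≤ n
    · have hnot := hn₁' n (le_trans (le_max_left _ _) hcase)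
      have hd : 1/2^(AEProof.JJ n) ≤ distNearestInt ((n:ℝ)*α) := by
        by_contra hcon
        push_neg at hcon
        exact hnot hcon
      refine le_trans ?_ hd
      apply one_div_le_one_div_of_le (by positivity)
      apply pow_le_pow_right₀ one_le_two
      unfold AEProof.JJ
      have := Nat.log_mono_right (b := 2) hnM
      omega
    · push_neg at hcase
      have hmem : n ∈ Finset.Icc 1 n₁ := Finset.mem_Icc.mpr ⟨hn1, hcase.le⟩
      have hcle : c ≤ distNearestInt ((n:ℝ)*α) := Finset.inf'_le _ hmem
      refine le_trans ?_ hcle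
      have hM1 : (⌈1/c⌉₊ + 1 : ℕ) ≤ M := le_trans (le_max_right _ _) hM
      have hMpow : (M:ℝ) + 1 ≤ 2^(AEProof.JJ M) := by
        have ha : M + 1 ≤ 2^(Nat.log 2 M + 1) := Nat.lt_pow_succ_log_self (by norm_num) M
        have hb : (2:ℕ)^(Nat.log 2 M + 1) ≤ 2^(AEProof.JJ M) :=
          Nat.pow_le_pow_right (by norm_num) (by unfold AEProof.JJ; omega)
        exact_mod_cast le_trans ha hb
      have hceil : (1:ℝ)/c ≤ (⌈1/c⌉₊ : ℝ) := Nat.le_ceil _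
      have hMc : ((⌈1/c⌉₊ : ℕ):ℝ) + 1 ≤ (M:ℝ) + 1 := by
        have : ((⌈1/c⌉₊ + 1 : ℕ):ℝ) ≤ (M:ℝ) := by exact_mod_cast hM1
        push_cast at this ⊢
        linarith
      have hlt : (1:ℝ)/c < 2^(AEProof.JJ M) := by linarith
      rw [div_le_iff₀ (by positivity : (0:ℝ) < 2^(AEProof.JJ M))]
      rw [div_lt_iff₀ hc0] at hlt
      linarith
  obtain ⟨k₀, hk₀⟩ := Filter.eventually_atTop.mp (h3 m)
  refine ⟨2, by norm_num, max N₁ (max (2^k₀) 1), ?_⟩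
  intro N hN K H hK1 hH1 hKN hHN
  have hN1 : 1 ≤ N := le_trans (le_trans (le_max_right _ _) (le_max_right _ _)) hN
  set k := Nat.log 2 N + 1 with hk_def
  have hNlt : N < 2^k := Nat.lt_pow_succ_log_self (by norm_num) N
  have h2k2N : 2^k ≤ 2*N := by
    have := Nat.pow_log_le_self 2 (Nat.one_le_iff_ne_zero.mp hN1)
    calc 2^k = 2 * 2^(Nat.log 2 N) := by rw [hk_def, pow_succ]; ring
      _ ≤ 2 * N := by omega
  have hkk₀ : k₀ ≤ k := by
    have h2k₀N : 2^k₀ ≤ N := le_trans (le_trans (le_max_left _ _) (le_max_right _ _)) hN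
    have := (Nat.le_log_iff_pow_le (by norm_num) (Nat.one_le_iff_ne_zero.mp hN1)).mpr h2k₀N
    omega
  have hNM : N ≤ 2^k := hNlt.le
  have hMN₁ : N₁ ≤ 2^k := le_trans (le_trans (le_max_left _ _) hN) hNM
  have hdom := AEProof.dominate (2^k) K H α (hgood (2^k) hMN₁)
    (le_trans hKN hNM) (le_trans hHN hNM)
  have hFF : AEProof.FF (2^k) α < ((2:ℝ)^k) ^ e := by
    have := hk₀ k hkk₀
    exact not_le.mp this
  have hchain : ((2:ℝ)^k) ^ e ≤ 2 * (N:ℝ) ^ ε := by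
    have hcast : ((2:ℝ)^k) ≤ 2 * (N:ℝ) := by
      have : ((2^k : ℕ):ℝ) ≤ ((2*N : ℕ):ℝ) := by exact_mod_cast h2k2N
      push_cast at this
      linarith
    have hstep1 : ((2:ℝ)^k) ^ e ≤ (2 * (N:ℝ)) ^ e :=
      Real.rpow_le_rpow (by positivity) hcast he0.le
    have hstep2 : (2 * (N:ℝ)) ^ e = (2:ℝ) ^ e * (N:ℝ) ^ e :=
      Real.mul_rpow (by norm_num) (Nat.cast_nonneg N)
    have hstep3 : (2:ℝ) ^ e ≤ 2 := by
      have := Real.rpow_le_rpow_of_exponent_le (by norm_num : (1:ℝ) ≤ 2) he1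
      rwa [Real.rpow_one] at this
    have hstep4 : (N:ℝ) ^ e ≤ (N:ℝ) ^ ε :=
      Real.rpow_le_rpow_of_exponent_le (by exact_mod_cast hN1) hm.le
    calc ((2:ℝ)^k) ^ e ≤ (2 * (N:ℝ)) ^ e := hstep1
      _ = (2:ℝ) ^ e * (N:ℝ) ^ e := hstep2
      _ ≤ 2 * (N:ℝ) ^ ε := by
          apply mul_le_mul hstep3 hstep4 (Real.rpow_nonneg (Nat.cast_nonneg N) e)
          norm_num
  linarith [hdom, hFF, hchain]

end
end
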